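/- For every odd positive integer m that is not fibbinary, there exist a unique odd positive integer p and a unique odd fibbinary number q such that m = q + p · 2^{L(q)}, where L(q) is the number of binary digits of q. -/

import Mathlib

/-- A natural number is fibbinary if its binary representation has no two consecutive 1 bits. -/
def Fibbinary (m : ℕ) : Prop := ∀ i : ℕ, ¬(m.testBit i ∧ m.testBit (i + 1))

private lemma testBit_of_bounds {n t : ℕ} (h1 : 2 ^ t ≤ n) (h2 : n < 2 ^ (t + 1)) :
    n.testBit t = true := by
  have hdiv : n / 2 ^ t = 1 := by
    apply Nat.div_eq_of_lt_le (by simpa using h1)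
    calc n < 2 ^ (t + 1) := h2
    _ = (1 + 1) * 2 ^ t := by ring
  simp [Nat.testBit_eq_decide_div_mod_eq, hdiv]

private lemma ge_of_testBit {n t : ℕ} (h : n.testBit t = true) : 2 ^ t ≤ n := by
  by_contra hlt
  push_neg at hlt
  have : n.testBit t = false := by
    simp [Nat.testBit_eq_decide_div_mod_eq, Nat.div_eq_of_lt hlt]
  simp [this] at h

theorem odd_nonfibbinary_decomposition (m : ℕ) (hodd : Odd m) (h : ¬ Fibbinary m) :
    ∃! pq : ℕ × ℕ, Odd pq.1 ∧ Odd pq.2 ∧ Fibbinary pq.2 ∧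
      m = pq.2 + pq.1 * 2 ^ Nat.size pq.2 := by
  have hex : ∃ i, m.testBit i ∧ m.testBit (i + 1) := by
    simpa [Fibbinary, not_forall] using h
  classical
  set k := Nat.find hex with hkdef
  obtain ⟨hbk, hbk1⟩ := Nat.find_spec hex
  have hmin : ∀ j < k, ¬(m.testBit j ∧ m.testBit (j + 1)) := fun j hj => Nat.find_min hex hj
  set q := m % 2 ^ (k + 1) with hq
  set p := m / 2 ^ (k + 1) with hp
  have hqbit : ∀ i, q.testBit i = (decide (i < k + 1) && m.testBit i) := fun i =>
    Nat.testBit_mod_two_pow m (k + 1) i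
  -- q odd
  have hqodd : Odd q := by
    rw [Nat.odd_iff] at hodd ⊢
    rw [hq, Nat.mod_mod_of_dvd m (dvd_pow_self 2 (Nat.succ_ne_zero k))]
    exact hodd
  -- p odd
  have hpodd : Odd p := by
    rw [Nat.odd_iff]
    have := hbk1
    rw [Nat.testBit_eq_decide_div_mod_eq] at this
    simpa [hp] using of_decide_eq_true this
  -- q fibbinary
  have hqfib : Fibbinary q := by
    intro i ⟨h1, h2⟩
    rw [hqbit] at h1 h2
    rcases lt_or_ge (i + 1) (k + 1) with hlt | hge
    · exact hmin i (Nat.lt_of_succ_lt_succ hlt)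
        ⟨by simpa [Nat.lt_of_succ_lt hlt] using h1, by simpa [hlt] using h2⟩
    · simp [Nat.not_lt.mpr hge] at h2
  -- size q = k + 1
  have hqlt : q < 2 ^ (k + 1) := Nat.mod_lt _ (Nat.pow_pos (by norm_num))
  have hqbk : q.testBit k = true := by rw [hqbit]; simpa using hbk
  have hsize : Nat.size q = k + 1 := by
    apply le_antisymm (Nat.size_le.mpr hqlt)
    exact Nat.lt_size.mpr (ge_of_testBit hqbk)
  have hmeq : m = q + p * 2 ^ Nat.size q := by
    rw [hsize, hq, hp, mul_comm]
    exact (Nat.mod_add_div m (2 ^ (k + 1))).symm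
  refine ⟨(p, q), ⟨hpodd, hqodd, hqfib, hmeq⟩, ?_⟩
  rintro ⟨p', q'⟩ ⟨hp', hq', hfib', heq'⟩
  set s := Nat.size q' with hsdef
  have hq'pos : 0 < q' := hq'.pos
  have hspos : 0 < s := Nat.size_pos.mpr hq'pos
  have hq'lt : q' < 2 ^ s := Nat.lt_size_self q'
  -- m % 2^s = q', m / 2^s = p'
  have hmod : m % 2 ^ s = q' := by
    rw [heq']; simp [Nat.add_mul_mod_self_right, Nat.mod_eq_of_lt hq'lt]
  have hdiv : m / 2 ^ s = p' := by
    rw [heq', Nat.add_mul_div_right _ _ (Nat.pow_pos (by norm_num)),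
      Nat.div_eq_of_lt hq'lt, zero_add]
  have hmbit : ∀ i, i < s → m.testBit i = q'.testBit i := by
    intro i hi
    have := Nat.testBit_mod_two_pow m s i
    rw [hmod] at this
    simp [this, hi]
  -- top bit of q'
  have htop : q'.testBit (s - 1) = true := by
    apply testBit_of_bounds
    · have : ¬ Nat.size q' ≤ s - 1 := by omega
      have := mt Nat.size_le.mpr (by omega : ¬ Nat.size q' ≤ s - 1)
      omega
    · have h11 : s - 1 + 1 = s := by omega
      rw [h11]; exact hq'lt
  have hms : m.testBit s = true := by
    rw [Nat.testBit_eq_decide_div_mod_eq, hdiv]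
    simpa using Nat.odd_iff.mp hp'
  have hpair : m.testBit (s - 1) ∧ m.testBit (s - 1 + 1) := by
    constructor
    · rw [hmbit _ (by omega)]; exact htop
    · have h11 : s - 1 + 1 = s := by omega
      rw [h11]; exact hms
  have hkle : k ≤ s - 1 := Nat.find_min' hex hpair
  have hsk : s = k + 1 := by
    rcases Nat.lt_or_ge k (s - 1) with hlt | hge
    · exfalso
      apply hfib' k
      constructor
      · rw [← hmbit _ (by omega)]; exact hbk
      · rw [← hmbit _ (by omega)]; exact hbk1
    · omega
  have hq'eq : q' = q := by rw [hq, ← hsk, hmod]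
  have hp'eq : p' = p := by rw [hp, ← hsk, hdiv]
  simp [hq'eq, hp'eq]
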